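/- Let q ≥ 1, let f be a formal power series in q variables over ℝ with nonzero constant coefficient f_θ, let n ≥ 1, and let t ∈ ℝ satisfy t^n = f_θ. Then there exists a q-fps g over ℝ with g^n = f and with constant coefficient g_θ = t. -/

import Mathlib

open MvPowerSeries IsLocalRing

namespace NthRootAux

variable {q : ℕ}

/-- total degree of a multi-index -/
def deg (d : Fin q →₀ ℕ) : ℕ := d.sum fun _ n => n

lemma deg_add (a b : Fin q →₀ ℕ) : deg (a + b) = deg a + deg b :=
  Finsupp.sum_add_index' (fun _ => rfl) (fun _ _ _ => rfl)

lemma apply_le_deg (d : Fin q →₀ ℕ) (i : Fin q) : d i ≤ deg d := by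
  by_cases h : i ∈ d.support
  · exact Finset.single_le_sum (fun _ _ => Nat.zero_le _) h
  · simp [Finsupp.notMem_support_iff.mp h]

lemma deg_eq_zero {d : Fin q →₀ ℕ} (h : deg d = 0) : d = 0 := by
  ext i
  have h2 : d i ≤ 0 := h ▸ apply_le_deg d i
  simpa using h2

lemma deg_single (i : Fin q) : deg (Finsupp.single i 1) = 1 := by
  simp [deg, Finsupp.sum_single_index]

lemma mem_maximalIdeal_iff (φ : MvPowerSeries (Fin q) ℝ) :
    φ ∈ maximalIdeal (MvPowerSeries (Fin q) ℝ) ↔ constantCoeff φ = 0 := by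
  rw [IsLocalRing.mem_maximalIdeal, mem_nonunits_iff, MvPowerSeries.isUnit_iff_constantCoeff,
    isUnit_iff_ne_zero, not_not]

/-- The ideal of power series whose coefficients vanish in degrees `< k`. -/
noncomputable def D (q k : ℕ) : Ideal (MvPowerSeries (Fin q) ℝ) where
  carrier := {φ | ∀ d, deg d < k → MvPowerSeries.coeff d φ = 0}
  add_mem' ha hb d hd := by rw [map_add, ha d hd, hb d hd, add_zero]
  zero_mem' d hd := map_zero _
  smul_mem' r φ hφ d hd := by
    rw [smul_eq_mul, MvPowerSeries.coeff_mul]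
    apply Finset.sum_eq_zero
    rintro ⟨u, v⟩ huv
    rw [Finset.HasAntidiagonal.mem_antidiagonal] at huv
    have h1 : deg u + deg v = deg d := by rw [← deg_add, huv]
    rw [hφ v (by omega), mul_zero]

lemma mem_D_iff {k : ℕ} {φ : MvPowerSeries (Fin q) ℝ} :
    φ ∈ D q k ↔ ∀ d, deg d < k → MvPowerSeries.coeff d φ = 0 := Iff.rfl

lemma D_mul_le (j k : ℕ) : D q j * D q k ≤ D q (j + k) := by
  rw [Ideal.mul_le]
  intro a ha b hb
  rw [mem_D_iff] at ha hb ⊢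
  intro d hd
  rw [MvPowerSeries.coeff_mul]
  apply Finset.sum_eq_zero
  rintro ⟨u, v⟩ huv
  rw [Finset.HasAntidiagonal.mem_antidiagonal] at huv
  have h1 : deg u + deg v = deg d := by rw [← deg_add, huv]
  rcases lt_or_ge (deg u) j with h | h
  · rw [ha u h, zero_mul]
  · rw [hb v (by omega), mul_zero]

lemma maximalIdeal_le_D :
    maximalIdeal (MvPowerSeries (Fin q) ℝ) ≤ D q 1 := by
  intro φ hφ
  rw [mem_D_iff]
  intro d hd
  have hd0 : d = 0 := deg_eq_zero (by omega)
  subst hd0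
  simpa [MvPowerSeries.coeff_zero_eq_constantCoeff] using (mem_maximalIdeal_iff φ).mp hφ

lemma pow_le_D (k : ℕ) :
    maximalIdeal (MvPowerSeries (Fin q) ℝ) ^ k ≤ D q k := by
  induction k with
  | zero => exact fun φ _ => mem_D_iff.mpr fun d hd => absurd hd (Nat.not_lt_zero _)
  | succ k ih =>
    rw [pow_succ]
    exact le_trans (Ideal.mul_mono ih maximalIdeal_le_D) (D_mul_le k 1)

lemma coeff_X_mul (i : Fin q) (ψ : MvPowerSeries (Fin q) ℝ) (d : Fin q →₀ ℕ) :
    MvPowerSeries.coeff d (MvPowerSeries.X i * ψ) =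
      if Finsupp.single i 1 ≤ d then MvPowerSeries.coeff (d - Finsupp.single i 1) ψ else 0 := by
  rw [show (MvPowerSeries.X i : MvPowerSeries (Fin q) ℝ)
      = MvPowerSeries.monomial (Finsupp.single i 1) 1 from rfl,
    MvPowerSeries.coeff_monomial_mul]
  split_ifs <;> simp

lemma D_le_pow (k : ℕ) :
    D q k ≤ maximalIdeal (MvPowerSeries (Fin q) ℝ) ^ k := by
  classical
  induction k with
  | zero => rw [pow_zero, Ideal.one_eq_top]; exact le_top
  | succ k ih =>
    intro φ hφ
    -- decompose φ = ∑ i, X i * h i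
    set h : Fin q → MvPowerSeries (Fin q) ℝ := fun i e =>
      if ∀ j, j < i → e j = 0 then MvPowerSeries.coeff (e + Finsupp.single i 1) φ else 0
      with hhdef
    have hco : ∀ i e, MvPowerSeries.coeff e (h i) =
        if ∀ j, j < i → e j = 0 then MvPowerSeries.coeff (e + Finsupp.single i 1) φ else 0 :=
      fun i e => rfl
    have hXh : φ = ∑ i : Fin q, MvPowerSeries.X i * h i := by
      ext d
      rw [map_sum]
      by_cases hd : d = 0
      · subst hd
        rw [hφ 0 (by simp [deg])]
        symm
        apply Finset.sum_eq_zero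
        intro i _
        rw [coeff_X_mul, if_neg]
        intro hle
        have := hle i
        simp at this
      · -- least nonzero index
        have hsupp : d.support.Nonempty := Finsupp.support_nonempty_iff.mpr hd
        set i₀ := d.support.min' hsupp with hi₀
        have hi₀mem : i₀ ∈ d.support := d.support.min'_mem hsupp
        have hi₀pos : 1 ≤ d i₀ := Nat.one_le_iff_ne_zero.mpr (Finsupp.mem_support_iff.mp hi₀mem)
        symm
        rw [Finset.sum_eq_single_of_mem i₀ (Finset.mem_univ i₀)]
        · rw [coeff_X_mul, if_pos (Finsupp.single_le_iff.mpr hi₀pos), hco, if_pos, 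
            tsub_add_cancel_of_le (Finsupp.single_le_iff.mpr hi₀pos)]
          intro j hj
          have hj0 : d j = 0 := by
            by_contra hne
            exact absurd (d.support.min'_le j (Finsupp.mem_support_iff.mpr hne)) (not_le.mpr hj)
          simp [Finsupp.tsub_apply, hj0]
        · intro b _ hb
          rw [coeff_X_mul]
          split_ifs with hle
          · have hb1 : 1 ≤ d b := by simpa using Finsupp.single_le_iff.mp hle
            have hbmem : b ∈ d.support := Finsupp.mem_support_iff.mpr (by omega)
            have hlt : i₀ < b := lt_of_le_of_ne (d.support.min'_le b hbmem) (Ne.symm hb)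
            rw [hco, if_neg]
            intro hall
            have h0 := hall i₀ hlt
            simp [Finsupp.tsub_apply, Finsupp.single_apply, hb] at h0
            omega
          · rfl
    rw [hXh]
    apply Ideal.sum_mem
    intro i _
    rw [pow_succ']
    apply Ideal.mul_mem_mul
    · rw [mem_maximalIdeal_iff, MvPowerSeries.constantCoeff_X]
    · apply ih
      intro e he
      rw [hco]
      split_ifs with hc
      · apply hφ
        rw [deg_add, deg_single]
        omega
      · rfl

lemma mem_pow_iff {k : ℕ} {φ : MvPowerSeries (Fin q) ℝ} :
    φ ∈ maximalIdeal (MvPowerSeries (Fin q) ℝ) ^ k ↔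
      ∀ d, deg d < k → MvPowerSeries.coeff d φ = 0 :=
  ⟨fun h => pow_le_D k h, fun h => D_le_pow k h⟩

lemma isAdicComplete (q : ℕ) :
    IsAdicComplete (maximalIdeal (MvPowerSeries (Fin q) ℝ)) (MvPowerSeries (Fin q) ℝ) where
  haus' x hx := by
    ext d
    have := hx (deg d + 1)
    rw [SModEq.zero, ← Ideal.one_eq_top, smul_eq_mul, mul_one, mem_pow_iff] at this
    rw [map_zero]
    exact this d (by omega)
  prec' f hf := by
    refine ⟨(fun d => MvPowerSeries.coeff d (f (deg d + 1)) : MvPowerSeries (Fin q) ℝ), fun n => ?_⟩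
    refine SModEq.sub_mem.mpr ?_
    rw [← Ideal.one_eq_top, smul_eq_mul, mul_one, mem_pow_iff]
    intro d hd
    have := hf (show min (deg d + 1) n ≤ max (deg d + 1) n from le_trans (min_le_left _ _) (le_max_left _ _))
    have key : MvPowerSeries.coeff d (f n) = MvPowerSeries.coeff d (f (deg d + 1)) := by
      have h1 := hf (show deg d + 1 ≤ max (deg d + 1) n from le_max_left _ _)
      have h2 := hf (show n ≤ max (deg d + 1) n from le_max_right _ _)
      rw [SModEq.sub_mem, ← Ideal.one_eq_top, smul_eq_mul, mul_one, mem_pow_iff] at h1 h2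
      have e1 := h1 d (by omega)
      have e2 := h2 d hd
      rw [map_sub, sub_eq_zero] at e1 e2
      rw [e2, e1]
    have hL : MvPowerSeries.coeff d
        (fun d => MvPowerSeries.coeff d (f (deg d + 1)) : MvPowerSeries (Fin q) ℝ) =
        MvPowerSeries.coeff d (f (deg d + 1)) := rfl
    exact (map_sub _ _ _).trans (sub_eq_zero.mpr (key.trans hL.symm))

end NthRootAux

/-- If `f` is a unit multivariable formal power series over `ℝ` and `t ∈ ℝ` satisfies
`t ^ n = f_θ`, then `f` has an `n`-th root `g` with constant coefficient `t`. -/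
theorem exists_nthRoot_with_constantCoeff {q n : ℕ} (hq : 1 ≤ q) (hn : 1 ≤ n)
    (f : MvPowerSeries (Fin q) ℝ)
    (hf : MvPowerSeries.constantCoeff f ≠ 0)
    (t : ℝ) (ht : t ^ n = MvPowerSeries.constantCoeff f) :
    ∃ g : MvPowerSeries (Fin q) ℝ,
      g ^ n = f ∧ MvPowerSeries.constantCoeff g = t := by
  haveI := NthRootAux.isAdicComplete q
  haveI : HenselianRing (MvPowerSeries (Fin q) ℝ)
      (IsLocalRing.maximalIdeal (MvPowerSeries (Fin q) ℝ)) :=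
    IsAdicComplete.henselianRing _ _
  have ht0 : t ≠ 0 := by
    intro h
    apply hf
    rw [← ht, h, zero_pow (by omega)]
  set P : Polynomial (MvPowerSeries (Fin q) ℝ) := Polynomial.X ^ n - Polynomial.C f with hP
  have hmonic : P.Monic := Polynomial.monic_X_pow_sub_C f (by omega)
  have h₁ : P.eval (MvPowerSeries.C t) ∈
      IsLocalRing.maximalIdeal (MvPowerSeries (Fin q) ℝ) := by
    rw [NthRootAux.mem_maximalIdeal_iff]
    simp [hP, ← ht]
  have hunit : IsUnit (P.derivative.eval (MvPowerSeries.C t)) := by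
    rw [MvPowerSeries.isUnit_iff_constantCoeff]
    have : P.derivative = Polynomial.C (n : MvPowerSeries (Fin q) ℝ) * Polynomial.X ^ (n - 1) := by
      simp [hP, Polynomial.derivative_X_pow]
    rw [this]
    simp only [Polynomial.eval_mul, Polynomial.eval_C, Polynomial.eval_pow, Polynomial.eval_X,
      map_mul, map_pow, MvPowerSeries.constantCoeff_C]
    have hnc : MvPowerSeries.constantCoeff (n : MvPowerSeries (Fin q) ℝ) = (n : ℝ) := by
      simp
    rw [hnc, isUnit_iff_ne_zero]
    positivity
  have h₂ : IsUnit ((Ideal.Quotient.mk (IsLocalRing.maximalIdeal (MvPowerSeries (Fin q) ℝ)))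
      (P.derivative.eval (MvPowerSeries.C t))) := hunit.map _
  obtain ⟨g, hg, hgm⟩ := HenselianRing.is_henselian P hmonic (MvPowerSeries.C t) h₁ h₂
  refine ⟨g, ?_, ?_⟩
  · have : g ^ n - f = 0 := by simpa [hP] using hg
    exact sub_eq_zero.mp this
  · have := (NthRootAux.mem_maximalIdeal_iff _).mp hgm
    rw [map_sub, MvPowerSeries.constantCoeff_C, sub_eq_zero] at this
    exact this
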